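/- Let α1, α2, m11, m12, m22, κ111, κ112, κ122, κ222, λ1111, λ1112, λ1122, λ1222, λ2222, κ1, κ2, λ11, λ12, λ22 be real numbers and define P(s1, s2, h) = α1·s1 + α2·s2 − (m11·s1² + m12·s1·s2 + m22·s2²) + κ111·s1³ + κ112·s1²·s2 + κ122·s1·s2² + κ222·s2³ + λ1111·s1⁴ + λ1112·s1³·s2 + λ1122·s1²·s2² + λ1222·s1·s2³ + λ2222·s2⁴ + (κ1·s1 + κ2·s2)·h + (λ11·s1² + λ12·s1·s2 + λ22·s2²)·h. Then s2·∂P/∂s1 − s1·∂P/∂s2 = 0 for all real s1, s2, h if and only if α1 = α2 = 0, m12 = 0, m11 = m22, κ111 = κ112 = κ122 = κ222 = 0, λ1112 = λ1222 = 0, λ1111 = λ2222, λ1122 = 2·λ2222, κ1 = κ2 = 0, λ12 = 0, and λ11 = λ22. -/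
import Mathlib


/-- The singlet-dependent part of the general renormalizable SM+2S scalar
potential, with `h = Φ†Φ` treated as an independent variable. -/
def sm2sPot (a1 a2 m11 m12 m22 k111 k112 k122 k222
    l1111 l1112 l1122 l1222 l2222 k1 k2 l11 l12 l22 : ℝ)
    (s1 s2 h : ℝ) : ℝ :=
  a1 * s1 + a2 * s2
    - (m11 * s1^2 + m12 * s1 * s2 + m22 * s2^2)
    + k111 * s1^3 + k112 * s1^2 * s2 + k122 * s1 * s2^2 + k222 * s2^3
    + l1111 * s1^4 + l1112 * s1^3 * s2 + l1122 * s1^2 * s2^2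
    + l1222 * s1 * s2^3 + l2222 * s2^4
    + (k1 * s1 + k2 * s2) * h
    + (l11 * s1^2 + l12 * s1 * s2 + l22 * s2^2) * h

lemma deriv_quartic (c0 c1 c2 c3 c4 x : ℝ) :
    deriv (fun t : ℝ => c0 + c1 * t + c2 * t^2 + c3 * t^3 + c4 * t^4) x
      = c1 + 2 * c2 * x + 3 * c3 * x^2 + 4 * c4 * x^3 := by
  have h : HasDerivAt (fun t : ℝ => c0 + c1 * t + c2 * t^2 + c3 * t^3 + c4 * t^4)
      (c1 + 2 * c2 * x + 3 * c3 * x^2 + 4 * c4 * x^3) x := by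
    have h1 : HasDerivAt (fun t : ℝ => c0 + c1 * t + c2 * t^2 + c3 * t^3 + c4 * t^4)
        (0 + c1 * 1 + c2 * (2 * x ^ 1) + c3 * (3 * x ^ 2) + c4 * (4 * x ^ 3)) x :=
      ((((hasDerivAt_const x c0).add ((hasDerivAt_id x).const_mul c1)).add
        ((hasDerivAt_pow 2 x).const_mul c2)).add
        ((hasDerivAt_pow 3 x).const_mul c3)).add
        ((hasDerivAt_pow 4 x).const_mul c4)
    convert h1 using 1
    ring
  exact h.deriv

theorem stmt_12 (a1 a2 m11 m12 m22 k111 k112 k122 k222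
    l1111 l1112 l1122 l1222 l2222 k1 k2 l11 l12 l22 : ℝ) :
    (∀ s1 s2 h : ℝ,
      s2 * deriv (fun x => sm2sPot a1 a2 m11 m12 m22 k111 k112 k122 k222
            l1111 l1112 l1122 l1222 l2222 k1 k2 l11 l12 l22 x s2 h) s1
        - s1 * deriv (fun y => sm2sPot a1 a2 m11 m12 m22 k111 k112 k122 k222
            l1111 l1112 l1122 l1222 l2222 k1 k2 l11 l12 l22 s1 y h) s2 = 0)
    ↔ (a1 = 0 ∧ a2 = 0 ∧ m12 = 0 ∧ m11 = m22 ∧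
        k111 = 0 ∧ k112 = 0 ∧ k122 = 0 ∧ k222 = 0 ∧
        l1112 = 0 ∧ l1222 = 0 ∧ l1111 = l2222 ∧ l1122 = 2 * l2222 ∧
        k1 = 0 ∧ k2 = 0 ∧ l12 = 0 ∧ l11 = l22) := by
  have hfun1 : ∀ s2 h : ℝ,
      (fun x => sm2sPot a1 a2 m11 m12 m22 k111 k112 k122 k222
          l1111 l1112 l1122 l1222 l2222 k1 k2 l11 l12 l22 x s2 h)
      = fun x : ℝ =>
          (a2 * s2 - m22 * s2^2 + k222 * s2^3 + l2222 * s2^4 + k2 * s2 * h + l22 * s2^2 * h)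
          + (a1 - m12 * s2 + k122 * s2^2 + l1222 * s2^3 + k1 * h + l12 * s2 * h) * x
          + (-m11 + k112 * s2 + l1122 * s2^2 + l11 * h) * x^2
          + (k111 + l1112 * s2) * x^3
          + l1111 * x^4 := by
    intro s2 h; funext x; simp only [sm2sPot]; ring
  have hfun2 : ∀ s1 h : ℝ,
      (fun y => sm2sPot a1 a2 m11 m12 m22 k111 k112 k122 k222
          l1111 l1112 l1122 l1222 l2222 k1 k2 l11 l12 l22 s1 y h)
      = fun y : ℝ =>
          (a1 * s1 - m11 * s1^2 + k111 * s1^3 + l1111 * s1^4 + k1 * s1 * h + l11 * s1^2 * h)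
          + (a2 - m12 * s1 + k112 * s1^2 + l1112 * s1^3 + k2 * h + l12 * s1 * h) * y
          + (-m22 + k122 * s1 + l1122 * s1^2 + l22 * h) * y^2
          + (k222 + l1222 * s1) * y^3
          + l2222 * y^4 := by
    intro s1 h; funext y; simp only [sm2sPot]; ring
  constructor
  · intro H
    have key : ∀ s1 s2 h : ℝ,
        s2 * ((a1 - m12 * s2 + k122 * s2^2 + l1222 * s2^3 + k1 * h + l12 * s2 * h)
            + 2 * (-m11 + k112 * s2 + l1122 * s2^2 + l11 * h) * s1
            + 3 * (k111 + l1112 * s2) * s1^2 + 4 * l1111 * s1^3)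
        - s1 * ((a2 - m12 * s1 + k112 * s1^2 + l1112 * s1^3 + k2 * h + l12 * s1 * h)
            + 2 * (-m22 + k122 * s1 + l1122 * s1^2 + l22 * h) * s2
            + 3 * (k222 + l1222 * s1) * s2^2 + 4 * l2222 * s2^3) = 0 := by
      intro s1 s2 h
      have h1 := H s1 s2 h
      rw [hfun1 s2 h, hfun2 s1 h, deriv_quartic, deriv_quartic] at h1
      linarith [h1]
    have e1 := key 1 0 0
    have e2 := key (-1) 0 0
    have e3 := key 2 0 0
    have e4 := key (-2) 0 0
    have f1 := key 0 1 0
    have f2 := key 0 (-1) 0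
    have f3 := key 0 2 0
    have f4 := key 0 (-2) 0
    have g1 := key 1 1 0
    have g2 := key 1 (-1) 0
    have g3 := key 2 1 0
    have g4 := key 1 2 0
    have g5 := key 2 (-1) 0
    have g6 := key (-1) 2 0
    have g7 := key 2 2 0
    have g8 := key 3 1 0
    have g9 := key 1 3 0
    have p1 := key 1 0 1
    have p2 := key 0 1 1
    have p3 := key 1 1 1
    have p4 := key 1 (-1) 1
    have p5 := key (-1) 1 1
    have p6 := key 2 1 1
    norm_num at e1 e2 e3 e4 f1 f2 f3 f4 g1 g2 g3 g4 g5 g6 g7 g8 g9 p1 p2 p3 p4 p5 p6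
    refine ⟨by linarith, by linarith, by linarith, by linarith,
      by linarith, by linarith, by linarith, by linarith,
      by linarith, by linarith, by linarith, by linarith,
      by linarith, by linarith, by linarith, by linarith⟩
  · rintro ⟨h1, h2, h3, h4, h5, h6, h7, h8, h9, h10, h11, h12, h13, h14, h15, h16⟩
    intro s1 s2 h
    rw [hfun1 s2 h, hfun2 s1 h, deriv_quartic, deriv_quartic]
    subst h1 h2 h3 h5 h6 h7 h8 h9 h10 h11 h12 h13 h14 h15
    rw [h4, h16]
    ring
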